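/- Let κ be a natural number with κ ≥ 2, let T ≥ 0, and let w : ℝ → ℝ be a function such that for every s ∈ [0, T] one has w(s) > 0 and w′(s) = −w(s)^{2−κ} (integer power, with exponent 2−κ ≤ 0). Then T < w(0)^{κ−1}/(κ−1). In particular, every positive solution of w′ = −w^{2−κ} reaches 0 in finite forward time; this is the finite-time blowup along the invariant manifolds at infinity (Corollary 2.5 of the paper, after the normal form reduces the flow at infinity to this scalar equation). -/

import Mathlib

/-- Let `κ ≥ 2`, `T ≥ 0`, and `w : ℝ → ℝ` be such that for every
`s ∈ [0, T]` one has `w s > 0` and `w'(s) = -(w s)^{2-κ}` (integer power). Then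
`T < w(0)^{κ-1}/(κ-1)`: positive solutions of `w' = -w^{2-κ}` reach `0` in finite
forward time (finite-time blowup along the invariant manifolds at infinity). -/
theorem zeroHopf_finite_time_blowup
    (κ : ℕ) (hκ : 2 ≤ κ) (T : ℝ) (hT : 0 ≤ T) (w : ℝ → ℝ)
    (hw : ∀ s ∈ Set.Icc (0 : ℝ) T,
      0 < w s ∧ HasDerivAt w (-(w s ^ ((2 : ℤ) - κ))) s) :
    T < w 0 ^ (κ - 1) / ((κ : ℝ) - 1) := by
  set f : ℝ → ℝ := fun t => w t ^ (κ - 1) + ((κ : ℝ) - 1) * t with hf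
  have hκR : (0 : ℝ) < (κ : ℝ) - 1 := by
    have : (2 : ℝ) ≤ (κ : ℝ) := by exact_mod_cast hκ
    linarith
  have hderiv : ∀ s ∈ Set.Icc (0 : ℝ) T, HasDerivAt f 0 s := by
    intro s hs
    obtain ⟨hpos, hd⟩ := hw s hs
    have h1 : HasDerivAt (fun t => w t ^ (κ - 1))
        (↑(κ - 1) * w s ^ (κ - 1 - 1) * (-(w s ^ ((2 : ℤ) - κ)))) s := hd.pow (κ - 1)
    have hne : w s ≠ 0 := ne_of_gt hpos
    have key : (w s : ℝ) ^ (κ - 1 - 1) * (w s ^ ((2 : ℤ) - κ)) = 1 := by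
      rw [← zpow_natCast (w s) (κ - 1 - 1), ← zpow_add₀ hne]
      have : ((κ - 1 - 1 : ℕ) : ℤ) + ((2 : ℤ) - κ) = 0 := by
        have : ((κ - 1 - 1 : ℕ) : ℤ) = (κ : ℤ) - 2 := by omega
        omega
      rw [this, zpow_zero]
    have hcast : ((κ - 1 : ℕ) : ℝ) = (κ : ℝ) - 1 := by
      have : (1 : ℕ) ≤ κ := by omega
      push_cast [this]; ring
    have h1' : HasDerivAt (fun t => w t ^ (κ - 1)) (-((κ : ℝ) - 1)) s := by
      convert h1 using 1
      rw [hcast]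
      have : (↑κ - 1) * w s ^ (κ - 1 - 1) * -w s ^ ((2:ℤ) - ↑κ)
          = -((↑κ - 1) * (w s ^ (κ - 1 - 1) * w s ^ ((2:ℤ) - ↑κ))) := by ring
      rw [this, key, mul_one]
    have h2 : HasDerivAt (fun t => ((κ : ℝ) - 1) * t) ((κ : ℝ) - 1) s := by
      simpa using (hasDerivAt_id s).const_mul ((κ : ℝ) - 1)
    have h3 := h1'.add h2
    rw [neg_add_cancel] at h3
    exact h3
  have hcont : ContinuousOn f (Set.Icc 0 T) := fun s hs =>
    (hderiv s hs).continuousAt.continuousWithinAt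
  have hconst := constant_of_has_deriv_right_zero hcont
    (fun s hs => (hderiv s (Set.mem_Icc_of_Ico hs)).hasDerivWithinAt)
  have hfT : f T = f 0 := hconst T (Set.right_mem_Icc.2 hT)
  have hwT : 0 < w T ^ (κ - 1) :=
    pow_pos (hw T (Set.right_mem_Icc.2 hT)).1 _
  have : w T ^ (κ - 1) + ((κ : ℝ) - 1) * T = w 0 ^ (κ - 1) + ((κ : ℝ) - 1) * 0 := hfT
  rw [lt_div_iff₀ hκR]
  nlinarith
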